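/- arXiv:1309.7506 — 12 statements merged into one kernel-verified Lean document; each statement's English description precedes it below -/
import Mathlib

section
/- Define a sequence by a₁ = 1 and a_{n+1} = (a₁ + a₂ + ... + a_n)!. Then for all indices i < j ≤ n with n ≥ j, the sum a_i + a_{i+1} + ... + a_{j-1} divides a_n. -/
theorem stmt_0 (a : ℕ → ℕ) (h1 : a 1 = 1)
    (hrec : ∀ n, 1 ≤ n → a (n + 1) = Nat.factorial (∑ m ∈ Finset.Icc 1 n, a m)) :
    ∀ i j n, 1 ≤ i → i < j → j ≤ n →
      (∑ m ∈ Finset.Ico i j, a m) ∣ a n := by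
  have hpos : ∀ m, 1 ≤ m → 0 < a m := by
    intro m hm
    rcases Nat.exists_eq_add_of_le hm with ⟨k, rfl⟩
    cases k with
    | zero => simp [h1]
    | succ k =>
      rw [show 1 + (k + 1) = (1 + k) + 1 by ring, hrec (1 + k) (by omega)]
      exact Nat.factorial_pos _
  intro i j n hi hij hjn
  obtain ⟨k, rfl⟩ : ∃ k, n = k + 1 := ⟨n - 1, by omega⟩
  have hk : 1 ≤ k := by omega
  rw [hrec k hk]
  apply Nat.dvd_factorial
  · apply Finset.sum_pos
    · intro m hm
      exact hpos m (by simp only [Finset.mem_Ico] at hm; omega)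
    · exact ⟨i, Finset.mem_Ico.mpr ⟨le_rfl, hij⟩⟩
  · apply Finset.sum_le_sum_of_subset
    intro x hx
    simp only [Finset.mem_Ico] at hx
    simp only [Finset.mem_Icc]
    omega
end

section
/- Define a sequence by a₁ = 1 and a_{n+1} = (a₁ + ... + a_n)!. Then for all indices i < j < k, the partial sum a_i + a_{i+1} + ... + a_{j-1} divides the partial sum a_j + a_{j+1} + ... + a_{k-1}. -/
theorem stmt_1 (a : ℕ → ℕ) (h1 : a 1 = 1)
    (hrec : ∀ n, 1 ≤ n → a (n + 1) = Nat.factorial (∑ m ∈ Finset.Icc 1 n, a m)) :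
    ∀ i j k, 1 ≤ i → i < j → j < k →
      (∑ m ∈ Finset.Ico i j, a m) ∣ (∑ m ∈ Finset.Ico j k, a m) := by
  intro i j k hi hij hjk
  have ha : ∀ m, 1 ≤ m → 0 < a m := by
    intro m hm
    rcases Nat.lt_or_ge m 2 with h | h
    · have : m = 1 := by omega
      simp [this, h1]
    · obtain ⟨n, rfl⟩ : ∃ n, m = n + 1 := ⟨m - 1, by omega⟩
      rw [hrec n (by omega)]
      exact Nat.factorial_pos _
  have hSpos : 0 < ∑ m ∈ Finset.Ico i j, a m := by
    apply Finset.sum_pos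
    · intro m hm
      rw [Finset.mem_Ico] at hm
      exact ha m (by omega)
    · exact ⟨i, Finset.mem_Ico.mpr ⟨le_refl i, hij⟩⟩
  have hdvd : ∀ m, j ≤ m → (∑ x ∈ Finset.Ico i j, a x) ∣ a m := by
    intro m hm
    obtain ⟨n, rfl⟩ : ∃ n, m = n + 1 := ⟨m - 1, by omega⟩
    rw [hrec n (by omega)]
    apply Nat.dvd_factorial hSpos
    apply Finset.sum_le_sum_of_subset
    intro x hx
    rw [Finset.mem_Ico] at hx
    rw [Finset.mem_Icc]
    omega
  have main : ∀ K, j ≤ K → (∑ x ∈ Finset.Ico i j, a x) ∣ ∑ m ∈ Finset.Ico j K, a m := by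
    intro K hK
    induction K with
    | zero => omega
    | succ K ih =>
      rcases Nat.lt_or_ge j (K + 1) with h | h
      · have hjK : j ≤ K := by omega
        rw [Finset.sum_Ico_succ_top hjK]
        exact dvd_add (ih hjK) (hdvd K hjK)
      · have hj : j = K + 1 := by omega
        simp [hj]
  exact main k (by omega)
end

section
/- For every finite partition of the positive integers into l classes C₁, ..., C_l, there exist an index i and positive integers x, y, z all belonging to C_i such that x + y = z and x divides y. -/
/-- A fast growing function: `Fb (n+1) = Fb n + (Fb n)!`. -/
def Fb : ℕ → ℕ
  | 0 => 1
  | n + 1 => Fb n + (Fb n).factorial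

lemma Fb_pos (n : ℕ) : 0 < Fb n := by
  induction n with
  | zero => simp [Fb]
  | succ n ih => simp [Fb]; omega

lemma Fb_strictMono : StrictMono Fb := by
  apply strictMono_nat_of_lt_succ
  intro n
  have := Nat.factorial_pos (Fb n)
  simp [Fb]; omega

lemma Fb_dvd_factorial {i j m : ℕ} (hij : i < j) (hjm : j ≤ m) :
    (Fb j - Fb i) ∣ (Fb m).factorial := by
  have h1 : Fb i < Fb j := Fb_strictMono hij
  have h2 : Fb j ≤ Fb m := Fb_strictMono.monotone hjm
  exact Nat.dvd_factorial (by omega) (by omega)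

lemma Fb_key {i j k : ℕ} (hij : i < j) (hjk : j < k) :
    (Fb j - Fb i) ∣ (Fb k - Fb j) := by
  induction k with
  | zero => omega
  | succ k ih =>
    rcases Nat.lt_or_ge j k with h | h
    · have h1 := ih h
      have h2 : Fb j ≤ Fb k := (Fb_strictMono h).le
      have h3 : Fb (k + 1) - Fb j = (Fb k - Fb j) + (Fb k).factorial := by
        simp only [Fb]; omega
      rw [h3]
      exact dvd_add h1 (Fb_dvd_factorial hij h.le)
    · have hjk' : j = k := by omega
      subst hjk'
      have h3 : Fb (j + 1) - Fb j = (Fb j).factorial := by simp only [Fb]; omega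
      rw [h3]
      exact Fb_dvd_factorial hij le_rfl

lemma exists_infinite_fiber {l : ℕ} (S : Set ℕ) (hS : S.Infinite) (f : ℕ → Fin l) :
    ∃ i, {x ∈ S | f x = i}.Infinite := by
  by_contra h
  push_neg at h
  have h : ∀ i, {x ∈ S | f x = i}.Finite := h
  have hsub : S ⊆ ⋃ i : Fin l, {x ∈ S | f x = i} :=
    fun x hx => Set.mem_iUnion.2 ⟨f x, hx, rfl⟩
  exact hS ((Set.finite_iUnion h).subset hsub)

lemma ramsey_step {l : ℕ} (χ : ℕ → ℕ → Fin l) (S : Set ℕ) (hS : S.Infinite) :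
    ∃ d : Fin l, {x ∈ S | sInf S < x ∧ χ (sInf S) x = d}.Infinite := by
  have h1 : {x ∈ S | sInf S < x}.Infinite := by
    have he : {x ∈ S | sInf S < x} = S \ Set.Iic (sInf S) := by
      ext x; simp only [Set.mem_setOf_eq, Set.mem_diff, Set.mem_Iic, not_le]
    rw [he]; exact hS.diff (Set.finite_Iic _)
  obtain ⟨d, hd⟩ := exists_infinite_fiber _ h1 (χ (sInf S))
  refine ⟨d, hd.mono ?_⟩
  intro x hx
  simp only [Set.mem_setOf_eq] at hx ⊢
  tauto

noncomputable def chain {l : ℕ} (χ : ℕ → ℕ → Fin l) : ℕ → {S : Set ℕ // S.Infinite}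
  | 0 => ⟨Set.univ, Set.infinite_univ⟩
  | n + 1 =>
    ⟨{x ∈ (chain χ n).1 | sInf (chain χ n).1 < x ∧
        χ (sInf (chain χ n).1) x = (ramsey_step χ (chain χ n).1 (chain χ n).2).choose},
      (ramsey_step χ (chain χ n).1 (chain χ n).2).choose_spec⟩

noncomputable def ca {l : ℕ} (χ : ℕ → ℕ → Fin l) (n : ℕ) : ℕ := sInf (chain χ n).1

noncomputable def cd {l : ℕ} (χ : ℕ → ℕ → Fin l) (n : ℕ) : Fin l :=
  (ramsey_step χ (chain χ n).1 (chain χ n).2).choose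

lemma chain_succ_subset {l : ℕ} (χ : ℕ → ℕ → Fin l) (n : ℕ) :
    ∀ x ∈ (chain χ (n + 1)).1, x ∈ (chain χ n).1 ∧ ca χ n < x ∧ χ (ca χ n) x = cd χ n := by
  intro x hx
  exact hx

lemma chain_subset {l : ℕ} (χ : ℕ → ℕ → Fin l) {n m : ℕ} (h : n ≤ m) :
    (chain χ m).1 ⊆ (chain χ n).1 := by
  induction m with
  | zero => simp_all
  | succ m ih =>
    rcases Nat.lt_or_ge n (m + 1) with h' | h'
    · intro x hx
      exact ih (by omega) (chain_succ_subset χ m x hx).1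
    · have : n = m + 1 := by omega
      subst this; exact fun x hx => hx

lemma ca_mem {l : ℕ} (χ : ℕ → ℕ → Fin l) (n : ℕ) : ca χ n ∈ (chain χ n).1 :=
  Nat.sInf_mem (chain χ n).2.nonempty

lemma ca_prop {l : ℕ} (χ : ℕ → ℕ → Fin l) {i j : ℕ} (hij : i < j) :
    ca χ i < ca χ j ∧ χ (ca χ i) (ca χ j) = cd χ i := by
  have h1 : ca χ j ∈ (chain χ (i + 1)).1 := chain_subset χ hij (ca_mem χ j)
  have h2 := chain_succ_subset χ i _ h1
  exact ⟨h2.2.1, h2.2.2⟩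

lemma ramsey_triangle {l : ℕ} (χ : ℕ → ℕ → Fin l) :
    ∃ i j k : ℕ, i < j ∧ j < k ∧ χ i j = χ j k ∧ χ i j = χ i k := by
  have hcard : Fintype.card (Fin l) < Fintype.card (Fin (l + 1)) := by simp
  obtain ⟨p, q, hpq, heq⟩ :=
    Fintype.exists_ne_map_eq_of_card_lt (fun n : Fin (l + 1) => cd χ (n : ℕ)) hcard
  have hpq' : (p : ℕ) ≠ (q : ℕ) := fun h => hpq (Fin.ext h)
  -- wlog p < q
  rcases Nat.lt_or_ge (p : ℕ) (q : ℕ) with h | h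
  · refine ⟨ca χ p, ca χ q, ca χ (q + 1), (ca_prop χ h).1, (ca_prop χ (Nat.lt_succ_self _)).1,
      ?_, ?_⟩
    · rw [(ca_prop χ h).2, (ca_prop χ (Nat.lt_succ_self (q : ℕ))).2, heq]
    · rw [(ca_prop χ h).2, (ca_prop χ (show (p:ℕ) < (q:ℕ) + 1 by omega)).2]
  · have h' : (q : ℕ) < (p : ℕ) := by omega
    refine ⟨ca χ q, ca χ p, ca χ (p + 1), (ca_prop χ h').1, (ca_prop χ (Nat.lt_succ_self _)).1,
      ?_, ?_⟩
    · rw [(ca_prop χ h').2, (ca_prop χ (Nat.lt_succ_self (p : ℕ))).2, heq]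
    · rw [(ca_prop χ h').2, (ca_prop χ (show (q:ℕ) < (p:ℕ) + 1 by omega)).2]

theorem stmt_2 (l : ℕ) (c : ℕ → Fin l) :
    ∃ x y z : ℕ, 0 < x ∧ 0 < y ∧ 0 < z ∧ x + y = z ∧ x ∣ y ∧
      c x = c y ∧ c y = c z := by
  obtain ⟨i, j, k, hij, hjk, h1, h2⟩ := ramsey_triangle (fun i j => c (Fb j - Fb i))
  have hFij : Fb i < Fb j := Fb_strictMono hij
  have hFjk : Fb j < Fb k := Fb_strictMono hjk
  refine ⟨Fb j - Fb i, Fb k - Fb j, Fb k - Fb i, by omega, by omega, by omega, by omega,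
    Fb_key hij hjk, h1, ?_⟩
  rw [← h1, h2]
end

section
/- For every positive integer l there exists a number S'(l) such that for every partition of {1, 2, ..., S'(l)} into l classes, there exist x, y, z ≤ S'(l) in the same class with x + y = z and x ∣ y. -/
/-- The divisibility-structured sequence: `v 0 = 0`, `v (n+1) = v n + (v n)!`. -/
private def vseq : ℕ → ℕ
  | 0 => 0
  | n + 1 => vseq n + (vseq n).factorial

private lemma vseq_lt_succ (n : ℕ) : vseq n < vseq (n + 1) := by
  show vseq n < vseq n + (vseq n).factorial
  have := Nat.factorial_pos (vseq n)
  omega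

private lemma vseq_mono : StrictMono vseq :=
  strictMono_nat_of_lt_succ vseq_lt_succ

/-- Key divisibility: for `i < j < k`, `(v j - v i) ∣ (v k - v j)`. -/
private lemma vseq_dvd : ∀ k j i : ℕ, i < j → j < k → (vseq j - vseq i) ∣ (vseq k - vseq j) := by
  intro k
  induction k with
  | zero => intro j i _ h; omega
  | succ m ih =>
    intro j i hij hjk
    have hvm : vseq j ≤ vseq m := vseq_mono.monotone (by omega)
    have hvi : vseq i < vseq j := vseq_mono hij
    have hle : vseq j - vseq i ≤ vseq m := by omega
    have hpos : 0 < vseq j - vseq i := by omega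
    have hfac : (vseq j - vseq i) ∣ (vseq m).factorial := Nat.dvd_factorial hpos hle
    rcases Nat.lt_or_ge j m with hjm | hjm
    · have h1 : (vseq j - vseq i) ∣ (vseq m - vseq j) := ih j i hij hjm
      have heq : vseq (m + 1) - vseq j = (vseq m).factorial + (vseq m - vseq j) := by
        show vseq m + (vseq m).factorial - vseq j = _
        omega
      rw [heq]
      exact Nat.dvd_add hfac h1
    · have hjm' : j = m := by omega
      subst hjm'
      have heq : vseq (j + 1) - vseq j = (vseq j).factorial := by
        show vseq j + (vseq j).factorial - vseq j = _
        omega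
      rw [heq]; exact hfac

/-- Greedy pre-Ramsey extraction. -/
private lemma extract (l : ℕ) (hl : 0 < l) :
    ∀ m (χ : ℕ → ℕ → Fin l) (S : Finset ℕ), (l + 1) ^ m ≤ S.card →
      ∃ a : ℕ → ℕ, ∃ g : ℕ → Fin l,
        (∀ s, s < m → a s ∈ S) ∧
        (∀ s t, s < t → t < m → a s < a t ∧ χ (a s) (a t) = g s) := by
  intro m
  induction m with
  | zero =>
    intro χ S _
    exact ⟨id, fun _ => ⟨0, hl⟩, fun s hs => absurd hs (by omega), fun s t _ ht => by omega⟩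
  | succ m ih =>
    intro χ S hS
    have hpow : 0 < (l + 1) ^ (m + 1) := Nat.pow_pos (by omega)
    have hSne : S.Nonempty := Finset.card_pos.mp (by omega)
    set a0 := S.min' hSne with ha0
    have ha0S : a0 ∈ S := S.min'_mem hSne
    set S' := S.erase a0 with hS'
    have hcard' : S.card - 1 ≤ S'.card := by
      rw [hS', Finset.card_erase_of_mem ha0S]
    have hmaps : ∀ x ∈ S', χ a0 x ∈ (Finset.univ : Finset (Fin l)) := fun x _ => Finset.mem_univ _
    have hone : 1 ≤ (l + 1) ^ m := Nat.one_le_pow _ _ (by omega)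
    have hmul : (Finset.univ : Finset (Fin l)).card * (l + 1) ^ m ≤ S'.card := by
      rw [Finset.card_univ, Fintype.card_fin]
      have : (l + 1) ^ (m + 1) = (l + 1) ^ m * (l + 1) := by ring
      have h2 : l * (l + 1) ^ m + 1 ≤ (l + 1) ^ (m + 1) := by
        rw [this]; nlinarith
      omega
    obtain ⟨q, -, hq⟩ := Finset.exists_le_card_fiber_of_mul_le_card_of_maps_to hmaps
      ⟨⟨0, hl⟩, Finset.mem_univ _⟩ hmul
    set T := {x ∈ S' | χ a0 x = q} with hT
    obtain ⟨a', g', ha'mem, ha'prop⟩ := ih χ T hq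
    refine ⟨fun n => match n with | 0 => a0 | n + 1 => a' n,
            fun n => match n with | 0 => q | n + 1 => g' n, ?_, ?_⟩
    · intro s hs
      match s with
      | 0 => exact ha0S
      | s + 1 =>
        have := ha'mem s (by omega)
        rw [hT] at this
        exact Finset.mem_of_mem_erase (Finset.mem_filter.mp this).1
    · intro s t hst ht
      match s, t with
      | 0, t + 1 =>
        have hmem := ha'mem t (by omega)
        rw [hT] at hmem
        have hmem' := Finset.mem_filter.mp hmem
        have hS'mem := hmem'.1
        have hne : a' t ≠ a0 := Finset.ne_of_mem_erase hS'mem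
        have hSmem : a' t ∈ S := Finset.mem_of_mem_erase hS'mem
        have hle : a0 ≤ a' t := S.min'_le _ hSmem
        refine ⟨?_, hmem'.2⟩
        show a0 < a' t
        omega
      | s + 1, t + 1 => exact ha'prop s t (by omega) (by omega)

/-- Finite multicolor Ramsey for triangles (on initial segments of ℕ). -/
private lemma ramsey_tri (l : ℕ) (hl : 0 < l) (χ : ℕ → ℕ → Fin l) :
    ∃ i j k : ℕ, i < j ∧ j < k ∧ k < (l + 1) ^ (l + 2) ∧
      χ i j = χ j k ∧ χ i j = χ i k := by
  obtain ⟨a, g, hmem, hprop⟩ := extract l hl (l + 2) χ (Finset.range ((l + 1) ^ (l + 2)))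
    (by rw [Finset.card_range])
  -- pigeonhole on g over {0, ..., l}
  have hcard : (Finset.univ : Finset (Fin l)).card < (Finset.range (l + 1)).card := by
    simp
  obtain ⟨s1, hs1, s2, hs2, hne, hgeq⟩ :=
    Finset.exists_ne_map_eq_of_card_lt_of_maps_to hcard
      (fun x _ => Finset.mem_univ (g x))
  rw [Finset.mem_range] at hs1 hs2
  -- wlog s1 < s2
  rcases Nat.lt_or_ge s1 s2 with h | h
  · refine ⟨a s1, a s2, a (s2 + 1), (hprop s1 s2 h (by omega)).1,
      (hprop s2 (s2 + 1) (by omega) (by omega)).1, ?_, ?_, ?_⟩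
    · have := hmem (s2 + 1) (by omega)
      rwa [Finset.mem_range] at this
    · rw [(hprop s1 s2 h (by omega)).2, (hprop s2 (s2 + 1) (by omega) (by omega)).2, hgeq]
    · rw [(hprop s1 s2 h (by omega)).2, (hprop s1 (s2 + 1) (by omega) (by omega)).2]
  · have h' : s2 < s1 := by omega
    refine ⟨a s2, a s1, a (s1 + 1), (hprop s2 s1 h' (by omega)).1,
      (hprop s1 (s1 + 1) (by omega) (by omega)).1, ?_, ?_, ?_⟩
    · have := hmem (s1 + 1) (by omega)
      rwa [Finset.mem_range] at this
    · rw [(hprop s2 s1 h' (by omega)).2, (hprop s1 (s1 + 1) (by omega) (by omega)).2, hgeq]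
    · rw [(hprop s2 s1 h' (by omega)).2, (hprop s2 (s1 + 1) (by omega) (by omega)).2]

theorem stmt_3 (l : ℕ) (hl : 0 < l) :
    ∃ N : ℕ, 0 < N ∧ ∀ c : ℕ → Fin l,
      ∃ x y z : ℕ, 0 < x ∧ x ≤ N ∧ 0 < y ∧ y ≤ N ∧ 0 < z ∧ z ≤ N ∧
        c x = c y ∧ c y = c z ∧ x + y = z ∧ x ∣ y := by
  set R := (l + 1) ^ (l + 2) with hR
  refine ⟨vseq R, ?_, ?_⟩
  · have : vseq 0 < vseq R := vseq_mono (Nat.pow_pos (by omega))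
    simpa [vseq] using this
  · intro c
    obtain ⟨i, j, k, hij, hjk, hkR, h1, h2⟩ :=
      ramsey_tri l hl (fun i j => c (vseq j - vseq i))
    refine ⟨vseq j - vseq i, vseq k - vseq j, vseq k - vseq i, ?_, ?_, ?_, ?_, ?_, ?_, ?_, ?_, ?_, ?_⟩
    · have := vseq_mono hij; omega
    · have h1 : vseq j ≤ vseq k := vseq_mono.monotone (by omega)
      have h2 : vseq k ≤ vseq R := vseq_mono.monotone (by omega)
      omega
    · have := vseq_mono hjk; omega
    · have h2 : vseq k ≤ vseq R := vseq_mono.monotone (by omega)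
      omega
    · have h1 := vseq_mono hij; have h2 := vseq_mono hjk; omega
    · have h2 : vseq k ≤ vseq R := vseq_mono.monotone (by omega)
      omega
    · exact h1
    · -- c (vseq k - vseq j) = c (vseq k - vseq i)
      rw [← h1, h2]
    · have h1 := vseq_mono hij; have h2 := vseq_mono hjk; omega
    · exact vseq_dvd k j i hij hjk
end

section
/- For every positive integer k there is a bound N(k) such that for every prime p > N(k), there exist consecutive integers r and r+1 with 0 < r < r+1 < p, both of which are k-th power residues modulo p (i.e., both are nonzero k-th powers in ℤ/pℤ). -/
open Finset

lemma ramsey_triangle_s5 : ∀ k : ℕ, ∃ n : ℕ, ∀ (α : Type) (C : Finset α) (f : ℕ → ℕ → α) (S : Finset ℕ),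
    C.card ≤ k → n ≤ S.card → (∀ a ∈ S, ∀ b ∈ S, a < b → f a b ∈ C) →
    ∃ a ∈ S, ∃ b ∈ S, ∃ c ∈ S, a < b ∧ b < c ∧ f a b = f b c ∧ f a b = f a c := by
  intro k
  induction k with
  | zero =>
    refine ⟨2, fun α C f S hC hS hmem => ?_⟩
    classical
    obtain ⟨a, ha, b, hb, hab⟩ := Finset.one_lt_card.mp (by omega : 1 < S.card)
    rcases Nat.lt_or_ge a b with h | h
    · exact absurd (hmem a ha b hb h) (by simp [Finset.card_eq_zero.mp (Nat.le_zero.mp hC)])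
    · exact absurd (hmem b hb a ha (by omega)) (by simp [Finset.card_eq_zero.mp (Nat.le_zero.mp hC)])
  | succ k ih =>
    obtain ⟨n, hn⟩ := ih
    refine ⟨(k+1) * n + 2, fun α C f S hC hS hmem => ?_⟩
    classical
    have hSne : S.Nonempty := Finset.card_pos.mp (by omega)
    set v := S.min' hSne with hv
    have hvS : v ∈ S := S.min'_mem hSne
    set S' := S.erase v with hS'
    have hS'card : (k+1) * n + 1 ≤ S'.card := by
      rw [hS', Finset.card_erase_of_mem hvS]; omega
    have hmaps : ∀ u ∈ S', f v u ∈ C := by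
      intro u hu
      exact hmem v hvS u (Finset.mem_of_mem_erase hu)
        (lt_of_le_of_ne (S.min'_le u (Finset.mem_of_mem_erase hu))
          (Ne.symm (Finset.ne_of_mem_erase hu)))
    have hpig : ∃ i ∈ C, n < (S'.filter (fun u => f v u = i)).card := by
      apply Finset.exists_lt_card_fiber_of_mul_lt_card_of_maps_to hmaps
      calc C.card * n ≤ (k+1) * n := Nat.mul_le_mul_right n hC
        _ < S'.card := by omega
    obtain ⟨i, hiC, hT⟩ := hpig
    set T := S'.filter (fun u => f v u = i) with hTdef
    have hTsub : T ⊆ S := fun x hx => Finset.mem_of_mem_erase (Finset.mem_of_mem_filter x hx)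
    by_cases hcase : ∃ a ∈ T, ∃ b ∈ T, a < b ∧ f a b = i
    · obtain ⟨a, ha, b, hb, hab, hfab⟩ := hcase
      have hva : v < a := lt_of_le_of_ne (S.min'_le a (hTsub ha))
        (Ne.symm (Finset.ne_of_mem_erase (Finset.mem_of_mem_filter a ha)))
      have hfva : f v a = i := (Finset.mem_filter.mp ha).2
      have hfvb : f v b = i := (Finset.mem_filter.mp hb).2
      exact ⟨v, hvS, a, hTsub ha, b, hTsub hb, hva, hab, by rw [hfva, hfab], by rw [hfva, hfvb]⟩
    · push_neg at hcase
      have := hn α (C.erase i) f T (by rw [Finset.card_erase_of_mem hiC]; omega) (by omega)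
        (fun a ha b hb hab => Finset.mem_erase.mpr
          ⟨hcase a ha b hb hab, hmem a (hTsub ha) b (hTsub hb) hab⟩)
      obtain ⟨a, ha, b, hb, c, hc, h1, h2, h3, h4⟩ := this
      exact ⟨a, hTsub ha, b, hTsub hb, c, hTsub hc, h1, h2, h3, h4⟩

lemma schur_lemma (k : ℕ) : ∃ n : ℕ, ∀ (α : Type) (C : Finset α) (c : ℕ → α),
    C.card ≤ k → (∀ x, 0 < x → x < n → c x ∈ C) →
    ∃ x y, 0 < x ∧ 0 < y ∧ x + y < n ∧ c x = c y ∧ c x = c (x + y) := by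
  obtain ⟨n, hn⟩ := ramsey_triangle_s5 k
  refine ⟨n + 1, fun α C c hC hmem => ?_⟩
  have := hn α C (fun i j => c (j - i)) (Finset.range (n+1)) hC (by simp)
    (fun a ha b hb hab => hmem (b - a) (by omega) (by have := Finset.mem_range.mp hb; omega))
  obtain ⟨a, ha, b, hb, l, hl, h1, h2, h3, h4⟩ := this
  have hln := Finset.mem_range.mp hl
  refine ⟨b - a, l - b, by omega, by omega, by omega, ?_, ?_⟩
  · simpa using h3
  · have : b - a + (l - b) = l - a := by omega
    rw [this]; simpa using h4

lemma kth_power_of_pow_eq_one (p k : ℕ) [Fact p.Prime] (hk : 0 < k) (z : ZMod p)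
    (hz : z ^ ((p - 1) / Nat.gcd k (p - 1)) = 1) : ∃ s : ZMod p, s ≠ 0 ∧ s ^ k = z := by
  have hp2 : 2 ≤ p := (Fact.out : p.Prime).two_le
  set n := p - 1 with hn
  set d := Nat.gcd k n with hd
  have hdpos : 0 < d := Nat.gcd_pos_of_pos_left n hk
  have hdn : d ∣ n := Nat.gcd_dvd_right k n
  have hnpos : 0 < n := by omega
  set m := n / d with hm
  have hmd : m * d = n := Nat.div_mul_cancel hdn
  have hmpos : 0 < m := Nat.div_pos (Nat.le_of_dvd hnpos hdn) hdpos
  have hz0 : z ≠ 0 := by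
    intro h; rw [h, zero_pow (by omega)] at hz; exact one_ne_zero hz.symm
  set u : (ZMod p)ˣ := Units.mk0 z hz0 with hu
  obtain ⟨g, hg⟩ := IsCyclic.exists_generator (α := (ZMod p)ˣ)
  have hog : orderOf g = n := by
    rw [orderOf_eq_card_of_forall_mem_zpowers hg, Nat.card_eq_fintype_card, ZMod.card_units]
  obtain ⟨t, ht'⟩ := (mem_powers_iff_mem_zpowers.mpr (hg u))
  have ht : g ^ t = u := ht'
  -- u ^ m = 1
  have hum : u ^ m = 1 := by
    ext
    push_cast
    exact hz
  have hdvd : n ∣ t * m := by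
    rw [← hog]
    apply orderOf_dvd_of_pow_eq_one
    rw [pow_mul, ht, hum]
  have hdt : d ∣ t := by
    have : d * m ∣ t * m := by rw [Nat.mul_comm d m, hmd]; exact hdvd
    exact (Nat.mul_dvd_mul_iff_right hmpos).mp this
  obtain ⟨c, hc⟩ := hdt
  set a := Nat.gcdA k n with ha
  set b := Nat.gcdB k n with hb
  have hbez : (d : ℤ) = k * a + n * b := Nat.gcd_eq_gcd_ab k n
  refine ⟨((g ^ (a * c) : (ZMod p)ˣ) : ZMod p), Units.ne_zero _, ?_⟩
  have key : (g ^ (a * c : ℤ)) ^ k = u := by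
    rw [← zpow_natCast (g ^ (a * c : ℤ)) k, ← zpow_mul]
    have h1 : g ^ ((t : ℤ)) = u := by rw [zpow_natCast, ht]
    have hgn : g ^ ((n : ℤ)) = 1 := by rw [zpow_natCast, ← hog, pow_orderOf_eq_one]
    rw [← h1]
    have horder : ((n : ℤ)) ∣ (a * c * k - t) := by
      have : (t : ℤ) = d * c := by exact_mod_cast hc
      rw [this, hbez]
      ring_nf
      exact ⟨-(b * c), by ring⟩
    obtain ⟨e, he⟩ := horder
    have hexp : (a * c * k : ℤ) = t + n * e := by linarith [he]
    rw [hexp, zpow_add, zpow_mul, hgn, one_zpow, mul_one]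
  rw [← Units.val_pow_eq_pow_val, key, hu, Units.val_mk0]

theorem stmt_5 (k : ℕ) (hk : 0 < k) :
    ∃ N : ℕ, ∀ p : ℕ, p.Prime → p > N →
      ∃ r : ℕ, 0 < r ∧ r + 1 < p ∧
        (∃ s : ZMod p, s ≠ 0 ∧ s ^ k = (r : ZMod p)) ∧
        (∃ s : ZMod p, s ≠ 0 ∧ s ^ k = ((r + 1 : ℕ) : ZMod p)) := by
  obtain ⟨N, hN⟩ := schur_lemma k
  refine ⟨N, fun p hp hpN => ?_⟩
  haveI : Fact p.Prime := ⟨hp⟩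
  have hp2 : 2 ≤ p := hp.two_le
  set n := p - 1 with hn
  set d := Nat.gcd k n with hd
  have hdpos : 0 < d := Nat.gcd_pos_of_pos_left n hk
  have hdn : d ∣ n := Nat.gcd_dvd_right k n
  have hdk : d ∣ k := Nat.gcd_dvd_left k n
  have hnpos : 0 < n := by omega
  set m := n / d with hm
  have hmd : m * d = n := Nat.div_mul_cancel hdn
  classical
  -- coloring
  set c : ℕ → ZMod p := fun x => (x : ZMod p) ^ m with hc
  set C : Finset (ZMod p) := (Polynomial.nthRoots d (1 : ZMod p)).toFinset with hC
  have hCcard : C.card ≤ k := by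
    calc C.card ≤ Multiset.card (Polynomial.nthRoots d (1 : ZMod p)) :=
          Multiset.toFinset_card_le _
      _ ≤ d := Polynomial.card_nthRoots d 1
      _ ≤ k := Nat.le_of_dvd hk hdk
  have hne : ∀ x : ℕ, 0 < x → x < p → (x : ZMod p) ≠ 0 := by
    intro x hx hxp h
    rw [ZMod.natCast_eq_zero_iff] at h
    exact absurd (Nat.le_of_dvd hx h) (by omega)
  have hmem : ∀ x, 0 < x → x < N → c x ∈ C := by
    intro x hx hxN
    rw [hC, Multiset.mem_toFinset, Polynomial.mem_nthRoots hdpos]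
    rw [hc]
    rw [← pow_mul, hmd]
    exact ZMod.pow_card_sub_one_eq_one (hne x hx (by omega))
  obtain ⟨x, y, hx, hy, hxy, hcxy, hcxz⟩ := hN (ZMod p) C c hCcard hmem
  have hxp : x < p := by omega
  have hyp : y < p := by omega
  have hzp : x + y < p := by omega
  set av : ZMod p := (x : ZMod p) with hav
  set bv : ZMod p := (y : ZMod p) with hbv
  have hav0 : av ≠ 0 := hne x hx hxp
  have hbv0 : bv ≠ 0 := hne y hy hyp
  have hwv0 : av + bv ≠ 0 := by
    have : ((x + y : ℕ) : ZMod p) ≠ 0 := hne (x+y) (by omega) hzp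
    rwa [Nat.cast_add] at this
  set z₁ : ZMod p := av * bv⁻¹ with hz₁
  set z₂ : ZMod p := (av + bv) * bv⁻¹ with hz₂
  have hz₁0 : z₁ ≠ 0 := mul_ne_zero hav0 (inv_ne_zero hbv0)
  have hz₂0 : z₂ ≠ 0 := mul_ne_zero hwv0 (inv_ne_zero hbv0)
  have hz21 : z₂ = z₁ + 1 := by
    rw [hz₂, hz₁, add_mul, mul_inv_cancel₀ hbv0]
  have hbm : bv ^ m ≠ 0 := pow_ne_zero m hbv0
  have hab : av ^ m = bv ^ m := hcxy
  have hcast : ((x + y : ℕ) : ZMod p) = av + bv := by push_cast; rfl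
  have hwb : (av + bv) ^ m = bv ^ m := by
    have h2 : av ^ m = ((x + y : ℕ) : ZMod p) ^ m := hcxz
    rw [hcast] at h2
    rw [← h2, hab]
  have hz₁m : z₁ ^ m = 1 := by
    rw [hz₁, mul_pow, inv_pow, hab]
    exact mul_inv_cancel₀ hbm
  have hz₂m : z₂ ^ m = 1 := by
    rw [hz₂, mul_pow, inv_pow, hwb]
    exact mul_inv_cancel₀ hbm
  obtain ⟨s₁, hs₁0, hs₁⟩ := kth_power_of_pow_eq_one p k hk z₁ hz₁m
  obtain ⟨s₂, hs₂0, hs₂⟩ := kth_power_of_pow_eq_one p k hk z₂ hz₂m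
  refine ⟨z₁.val, ?_, ?_, ⟨s₁, hs₁0, ?_⟩, ⟨s₂, hs₂0, ?_⟩⟩
  · rcases Nat.eq_zero_or_pos z₁.val with h | h
    · exact absurd ((ZMod.val_eq_zero z₁).mp h) hz₁0
    · exact h
  · have hvlt : z₁.val < p := ZMod.val_lt z₁
    rcases Nat.lt_or_ge (z₁.val + 1) p with h | h
    · exact h
    · exfalso
      have hval : z₁.val = p - 1 := by omega
      have hz₁eq : z₁ = -1 := by
        have hval' : ((z₁.val : ℕ) : ZMod p) = z₁ := by rw [ZMod.natCast_val, ZMod.cast_id]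
        rw [← hval', hval, Nat.cast_sub (by omega), ZMod.natCast_self, Nat.cast_one, zero_sub]
      apply hz₂0
      rw [hz21, hz₁eq, neg_add_cancel]
  · rw [hs₁, ZMod.natCast_val, ZMod.cast_id]
  · rw [hs₂, hz21]
    push_cast
    rw [ZMod.natCast_val, ZMod.cast_id]
end

section
/- Let S(l) denote the finite Schur number for l colors (so every l-coloring of {1,...,S(l)} admits a monochromatic solution of x + y = z). If p > S(l) is a prime and H is a subgroup of (ℤ/pℤ)* of index at most l, then there exists an element h ∈ H with h + 1 ∈ H. -/
theorem stmt_6 (l S : ℕ)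
    (hS : ∀ c : ℕ → Fin l, ∃ x y z : ℕ,
      0 < x ∧ x ≤ S ∧ 0 < y ∧ y ≤ S ∧ 0 < z ∧ z ≤ S ∧
      c x = c y ∧ c y = c z ∧ x + y = z)
    (p : ℕ) (hp : p.Prime) (hpS : p > S)
    (H : Subgroup (ZMod p)ˣ) (hidx : H.index ≤ l) :
    ∃ h ∈ H, ∃ h' ∈ H, ((h' : (ZMod p)ˣ) : ZMod p) = ((h : (ZMod p)ˣ) : ZMod p) + 1 := by
  haveI : Fact p.Prime := ⟨hp⟩
  haveI : Finite ((ZMod p)ˣ ⧸ H) := Quotient.finite _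
  have hcard : Nat.card ((ZMod p)ˣ ⧸ H) = H.index := rfl
  have hidxpos : 0 < H.index := hcard ▸ Nat.card_pos
  have hl : 0 < l := lt_of_lt_of_le hidxpos hidx
  have hle : Nat.card ((ZMod p)ˣ ⧸ H) ≤ l := by rw [hcard]; exact hidx
  let e := Finite.equivFin ((ZMod p)ˣ ⧸ H)
  have key : ∀ n : ℕ, 0 < n → n ≤ S → (n : ZMod p) ≠ 0 := by
    intro n hn hnS h0
    have := (ZMod.natCast_eq_zero_iff n p).mp h0
    have := Nat.le_of_dvd hn this
    omega
  classical
  let c : ℕ → Fin l := fun n =>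
    if h : (n : ZMod p) = 0 then ⟨0, hl⟩
    else Fin.castLE hle (e (QuotientGroup.mk (Units.mk0 (n : ZMod p) h)))
  obtain ⟨x, y, z, hx, hxS, hy, hyS, hz, hzS, hxy, hyz, hsum⟩ := hS c
  have hx0 := key x hx hxS
  have hy0 := key y hy hyS
  have hz0 := key z hz hzS
  have hcxy : QuotientGroup.mk (s := H) (Units.mk0 (x : ZMod p) hx0)
      = QuotientGroup.mk (Units.mk0 (y : ZMod p) hy0) := by
    have : c x = c y := hxy
    simp only [c, dif_neg hx0, dif_neg hy0] at this
    exact e.injective (Fin.castLE_injective hle this)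
  have hcxz : QuotientGroup.mk (s := H) (Units.mk0 (x : ZMod p) hx0)
      = QuotientGroup.mk (Units.mk0 (z : ZMod p) hz0) := by
    have : c x = c z := hxy.trans hyz
    simp only [c, dif_neg hx0, dif_neg hz0] at this
    exact e.injective (Fin.castLE_injective hle this)
  have hH1 : (Units.mk0 (x : ZMod p) hx0)⁻¹ * Units.mk0 (y : ZMod p) hy0 ∈ H :=
    (QuotientGroup.eq (s := H)).mp hcxy
  have hH2 : (Units.mk0 (x : ZMod p) hx0)⁻¹ * Units.mk0 (z : ZMod p) hz0 ∈ H :=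
    (QuotientGroup.eq (s := H)).mp hcxz
  refine ⟨_, hH1, _, hH2, ?_⟩
  have hzeq : (z : ZMod p) = (x : ZMod p) + y := by
    rw [← hsum]; push_cast; ring
  simp only [Units.val_mul, Units.val_inv_eq_inv_val, Units.val_mk0]
  rw [hzeq]
  field_simp
  ring
end

section
/- Fix a positive integer k. There exists a constant C(k), independent of p, such that for every prime p > C(k) there is an integer r with 0 < r < r+1 ≤ C(k) such that both r and r+1 are k-th power residues modulo p. -/
def eseq : ℕ → ℕ
  | 0 => 1
  | t + 1 => eseq t + (eseq t).factorial



lemma eseq_pos (t : ℕ) : 0 < eseq t := by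
  induction t with
  | zero => simp [eseq]
  | succ t ih => simp only [eseq]; positivity

lemma eseq_strictMono : StrictMono eseq := by
  apply strictMono_nat_of_lt_succ
  intro t
  have := (eseq t).factorial_pos
  simp only [eseq]; omega

lemma eseq_dvd {i j l : ℕ} (hij : i < j) (hjl : j < l) :
    (eseq j - eseq i) ∣ (eseq l - eseq j) := by
  induction l with
  | zero => omega
  | succ l ih =>
    have hej : eseq i < eseq j := eseq_strictMono hij
    rcases Nat.lt_or_ge j l with h | h
    · have h1 : eseq j ≤ eseq l := (eseq_strictMono.le_iff_le).2 (le_of_lt h)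
      have h2 : eseq (l+1) - eseq j = (eseq l - eseq j) + (eseq l).factorial := by
        simp only [eseq]; omega
      rw [h2]
      exact Nat.dvd_add (ih h) (Nat.dvd_factorial (by omega)
        (by have := eseq_strictMono.le_iff_le.2 (le_of_lt hij); omega))
    · have hjl' : j = l := by omega
      subst hjl'
      have h2 : eseq (j+1) - eseq j = (eseq j).factorial := by simp only [eseq]; omega
      rw [h2]
      exact Nat.dvd_factorial (by omega) (by omega)

noncomputable def nseq (t : ℕ) : ℕ := 2 ^ (eseq t)

lemma pow_sub_one_dvd_pow_sub_one {a b : ℕ} (h : a ∣ b) :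
    (2 ^ a - 1) ∣ (2 ^ b - 1) := by
  obtain ⟨c, rfl⟩ := h
  rw [pow_mul]
  simpa using Nat.sub_dvd_pow_sub_pow (2 ^ a) 1 c

lemma two_pow_sub_eq {a b : ℕ} (h : a ≤ b) :
    2 ^ b - 2 ^ a = 2 ^ a * (2 ^ (b - a) - 1) := by
  rw [Nat.mul_sub, mul_one, ← pow_add]
  congr 2
  omega

lemma nseq_diff_dvd {i j l : ℕ} (hij : i < j) (hjl : j < l) :
    (nseq j - nseq i) ∣ (nseq l - nseq j) := by
  have h1 : eseq i ≤ eseq j := le_of_lt (eseq_strictMono hij)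
  have h2 : eseq j ≤ eseq l := le_of_lt (eseq_strictMono hjl)
  unfold nseq
  rw [two_pow_sub_eq h1, two_pow_sub_eq h2]
  exact mul_dvd_mul (pow_dvd_pow 2 h1) (pow_sub_one_dvd_pow_sub_one (eseq_dvd hij hjl))

lemma nseq_strictMono : StrictMono nseq := fun _ _ h =>
  Nat.pow_lt_pow_right one_lt_two (eseq_strictMono h)


def Rb : ℕ → ℕ
  | 0 => 2
  | m + 1 => (m + 1) * (Rb m + 1) + 1

lemma ramsey3 {β : Type} [DecidableEq β] :
    ∀ (m : ℕ) (T : Finset β) (f : ℕ → ℕ → β) (S : Finset ℕ),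
      T.card ≤ m → (∀ i j, i ∈ S → j ∈ S → i < j → f i j ∈ T) → Rb m ≤ S.card →
      ∃ i ∈ S, ∃ j ∈ S, ∃ l ∈ S, i < j ∧ j < l ∧ f i j = f j l ∧ f i j = f i l := by
  intro m
  induction m with
  | zero =>
    intro T f S hT hf hS
    exfalso
    have h2 : 1 < S.card := by simp only [Rb] at hS; omega
    obtain ⟨a, ha, b, hb, hab⟩ := Finset.one_lt_card.1 h2
    have hT0 : T = ∅ := Finset.card_eq_zero.1 (by omega)
    rcases Nat.lt_or_ge a b with h | h
    · exact absurd (hf a b ha hb h) (by simp [hT0])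
    · exact absurd (hf b a hb ha (by omega)) (by simp [hT0])
  | succ m ih =>
    intro T f S hT hf hS
    have hRb : Rb (m+1) = (m + 1) * (Rb m + 1) + 1 := rfl
    have hSne : S.Nonempty := Finset.card_pos.1 (by omega)
    set v := S.min' hSne with hv
    have hvS : v ∈ S := S.min'_mem hSne
    set S' := S.erase v with hS'
    have hS'card : (m + 1) * (Rb m + 1) ≤ S'.card := by
      have hc : S'.card = S.card - 1 := by
        rw [hS']; exact Finset.card_erase_of_mem hvS
      omega
    have hvlt : ∀ w ∈ S', v < w := by
      intro w hw
      have hwS : w ∈ S := Finset.mem_of_mem_erase hw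
      have := S.min'_le w hwS
      have : w ≠ v := Finset.ne_of_mem_erase hw
      omega
    have hS'ne : S'.Nonempty := by
      apply Finset.card_pos.1
      have h1 : 0 < (m+1) * (Rb m + 1) := Nat.mul_pos (Nat.succ_pos m) (Nat.succ_pos (Rb m))
      omega
    have hTne : T.Nonempty := by
      obtain ⟨w, hw⟩ := hS'ne
      exact ⟨f v w, hf v w hvS (Finset.mem_of_mem_erase hw) (hvlt w hw)⟩
    have hmaps : ∀ w ∈ S', f v w ∈ T := fun w hw =>
      hf v w hvS (Finset.mem_of_mem_erase hw) (hvlt w hw)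
    have hmul : T.card * (Rb m + 1) ≤ S'.card := by
      calc T.card * (Rb m + 1) ≤ (m+1) * (Rb m + 1) :=
            Nat.mul_le_mul_right _ hT
        _ ≤ S'.card := hS'card
    obtain ⟨t, htT, htcard⟩ :=
      Finset.exists_le_card_fiber_of_mul_le_card_of_maps_to hmaps hTne hmul
    set F := S'.filter (fun w => f v w = t) with hF
    have hFsub : ∀ w ∈ F, w ∈ S := fun w hw =>
      Finset.mem_of_mem_erase (Finset.mem_filter.1 hw).1
    have hFcol : ∀ w ∈ F, f v w = t := fun w hw => (Finset.mem_filter.1 hw).2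
    by_cases hcase : ∃ w ∈ F, ∃ w' ∈ F, w < w' ∧ f w w' = t
    · obtain ⟨w, hw, w', hw', hww', hcol⟩ := hcase
      refine ⟨v, hvS, w, hFsub w hw, w', hFsub w' hw', hvlt w (Finset.mem_filter.1 hw).1,
        hww', ?_, ?_⟩
      · rw [hFcol w hw, hcol]
      · rw [hFcol w hw, hFcol w' hw']
    · push_neg at hcase
      have hT' : (T.erase t).card ≤ m := by
        have := Finset.card_erase_of_mem htT
        omega
      have hf' : ∀ i j, i ∈ F → j ∈ F → i < j → f i j ∈ T.erase t := by
        intro i j hi hj hij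
        refine Finset.mem_erase.2 ⟨hcase i hi j hj hij, hf i j (hFsub i hi) (hFsub j hj) hij⟩
      obtain ⟨i, hi, j, hj, l, hl, h1, h2, h3, h4⟩ :=
        ih (T.erase t) f F hT' hf' (by omega)
      exact ⟨i, hFsub i hi, j, hFsub j hj, l, hFsub l hl, h1, h2, h3, h4⟩


lemma exists_kth_root (p k : ℕ) (hp : p.Prime) (hk : 0 < k) (a : ZMod p) (ha : a ≠ 0)
    (h : a ^ ((p - 1) / Nat.gcd k (p - 1)) = 1) : ∃ s : ZMod p, s ≠ 0 ∧ s ^ k = a := by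
  haveI : Fact p.Prime := ⟨hp⟩
  set d := Nat.gcd k (p - 1) with hd
  set E := (p - 1) / d with hE
  have hp1 : 0 < p - 1 := by have := hp.two_le; omega
  have hdpos : 0 < d := Nat.gcd_pos_of_pos_left _ hk
  have hddvd : d ∣ p - 1 := Nat.gcd_dvd_right _ _
  have hEpos : 0 < E := Nat.div_pos (Nat.le_of_dvd hp1 hddvd) hdpos
  have hdE : d * E = p - 1 := Nat.mul_div_cancel' hddvd
  have hau : IsUnit a := ha.isUnit
  set u := hau.unit with hu
  have huv : (u : ZMod p) = a := hau.unit_spec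
  have hu1 : u ^ E = 1 := by
    apply Units.ext
    push_cast [huv]
    simpa [huv] using h
  obtain ⟨g, hg⟩ := IsCyclic.exists_generator (α := (ZMod p)ˣ)
  have hord : orderOf g = p - 1 := by
    rw [orderOf_eq_card_of_forall_mem_zpowers hg, Nat.card_eq_fintype_card, ZMod.card_units p]
  obtain ⟨n, hn0⟩ := hg u
  have hn : g ^ n = u := hn0
  have h2 : g ^ (n * (E : ℤ)) = 1 := by
    rw [zpow_mul, zpow_natCast, hn]
    exact hu1
  have h3 : ((p - 1 : ℕ) : ℤ) ∣ n * E := by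
    rw [← hord]
    exact orderOf_dvd_iff_zpow_eq_one.2 h2
  have h4 : (d : ℤ) ∣ n := by
    have h5 : ((d * E : ℕ) : ℤ) ∣ n * (E : ℤ) := by rw [hdE]; exact h3
    rw [Nat.cast_mul] at h5
    have hE0 : (E : ℤ) ≠ 0 := by exact_mod_cast hEpos.ne'
    exact (mul_dvd_mul_iff_right hE0).1 h5
  obtain ⟨w, hw⟩ := h4
  have hbez : (d : ℤ) = k * Nat.gcdA k (p - 1) + ((p - 1 : ℕ) : ℤ) * Nat.gcdB k (p - 1) :=
    Nat.gcd_eq_gcd_ab k (p - 1)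
  set A := Nat.gcdA k (p - 1)
  set B := Nat.gcdB k (p - 1)
  have hgp : g ^ (((p - 1 : ℕ) : ℤ) * (B * w)) = 1 := by
    rw [zpow_mul, zpow_natCast, ← hord, pow_orderOf_eq_one, one_zpow]
  have e1 : (g ^ (A * w)) ^ (k : ℕ) = g ^ (A * w * (k : ℤ)) := by
    rw [← zpow_natCast (g ^ (A * w)) k, ← zpow_mul]
  have e2 : n = A * w * (k : ℤ) + ((p - 1 : ℕ) : ℤ) * (B * w) := by
    calc n = (d : ℤ) * w := hw
    _ = ((k : ℤ) * A + ((p - 1 : ℕ) : ℤ) * B) * w := by rw [← hbez]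
    _ = A * w * (k : ℤ) + ((p - 1 : ℕ) : ℤ) * (B * w) := by ring
  have hukey : (g ^ (A * w)) ^ (k : ℕ) = u := by
    rw [e1, ← hn, e2, zpow_add, hgp, mul_one]
  refine ⟨((g ^ (A * w) : (ZMod p)ˣ) : ZMod p), Units.ne_zero _, ?_⟩
  rw [← Units.val_pow_eq_pow_val, hukey, huv]

theorem stmt_7 (k : ℕ) (hk : 0 < k) :
    ∃ C : ℕ, ∀ p : ℕ, p.Prime → p > C →
      ∃ r : ℕ, 0 < r ∧ r + 1 ≤ C ∧
        (∃ s : ZMod p, s ≠ 0 ∧ s ^ k = (r : ZMod p)) ∧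
        (∃ s : ZMod p, s ≠ 0 ∧ s ^ k = ((r + 1 : ℕ) : ZMod p)) := by
  refine ⟨2 ^ (eseq (Rb k)), ?_⟩
  intro p hp hpC
  set C := 2 ^ (eseq (Rb k)) with hC
  haveI : Fact p.Prime := ⟨hp⟩
  haveI : NeZero p := ⟨hp.pos.ne'⟩
  set d := Nat.gcd k (p - 1) with hd
  set E := (p - 1) / d with hE
  have hp1 : 0 < p - 1 := by have := hp.two_le; omega
  have hdpos : 0 < d := Nat.gcd_pos_of_pos_left _ hk
  have hddvd : d ∣ p - 1 := Nat.gcd_dvd_right _ _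
  have hdE : d * E = p - 1 := Nat.mul_div_cancel' hddvd
  -- numbers below C are nonzero mod p
  have hlt : ∀ n : ℕ, 0 < n → n ≤ C → (n : ZMod p) ≠ 0 := by
    intro n hn hnC hzero
    rw [ZMod.natCast_eq_zero_iff] at hzero
    have := Nat.le_of_dvd hn hzero
    omega
  -- the coloring
  set χ : ℕ → ZMod p := fun n => (n : ZMod p) ^ E with hχ
  set T : Finset (ZMod p) := Finset.univ.filter (fun x => x ^ d = 1) with hT
  have hTsub : T ⊆ (Polynomial.nthRoots d (1 : ZMod p)).toFinset := by
    intro x hx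
    rw [Multiset.mem_toFinset, Polynomial.mem_nthRoots hdpos]
    exact (Finset.mem_filter.1 hx).2
  have hTcard : T.card ≤ k :=
    le_trans (le_trans (Finset.card_le_card hTsub)
      (le_trans (Multiset.toFinset_card_le _) (Polynomial.card_nthRoots d 1)))
      (Nat.gcd_le_left _ hk)
  have hnseqC : ∀ t, t < Rb k → nseq t ≤ C := by
    intro t ht
    exact Nat.pow_le_pow_right (by norm_num)
      (eseq_strictMono.monotone (le_of_lt ht))
  have hDpos : ∀ i j : ℕ, i < j → 0 < nseq j - nseq i := by
    intro i j hij
    have := nseq_strictMono hij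
    omega
  have hDC : ∀ i j : ℕ, i < j → j < Rb k → nseq j - nseq i ≤ C := by
    intro i j hij hj
    have := hnseqC j hj
    omega
  have hmem : ∀ i j, i ∈ Finset.range (Rb k) → j ∈ Finset.range (Rb k) → i < j →
      χ (nseq j - nseq i) ∈ T := by
    intro i j hi hj hij
    rw [Finset.mem_range] at hi hj
    have h1 : ((nseq j - nseq i : ℕ) : ZMod p) ≠ 0 :=
      hlt _ (hDpos i j hij) (hDC i j hij hj)
    rw [hT, Finset.mem_filter]
    refine ⟨Finset.mem_univ _, ?_⟩
    rw [hχ]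
    simp only []
    rw [← pow_mul, mul_comm E d, hdE]
    exact ZMod.pow_card_sub_one_eq_one h1
  obtain ⟨i, hi, j, hj, l, hl, hij, hjl, hxy, hxz⟩ :=
    ramsey3 k T (fun i j => χ (nseq j - nseq i)) (Finset.range (Rb k))
      hTcard hmem (by rw [Finset.card_range])
  rw [Finset.mem_range] at hi hj hl
  set x := nseq j - nseq i with hx
  set y := nseq l - nseq j with hy
  set z := nseq l - nseq i with hz
  obtain ⟨m, hm0⟩ := nseq_diff_dvd hij hjl
  have hm : y = x * m := hm0
  have hxpos : 0 < x := hDpos i j hij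
  have hypos : 0 < y := hDpos j l hjl
  have hmpos : 0 < m := by
    rcases Nat.eq_zero_or_pos m with h | h
    · rw [h, mul_zero] at hm; omega
    · exact h
  have hzeq : z = x * (m + 1) := by
    have h1 : nseq i < nseq j := nseq_strictMono hij
    have h2 : nseq j < nseq l := nseq_strictMono hjl
    have : z = x + y := by omega
    rw [this, hm]; ring
  have hzC : z ≤ C := hDC i l (lt_trans hij hjl) hl
  have hm1z : m + 1 ≤ z := by
    rw [hzeq]
    calc m + 1 = 1 * (m + 1) := by ring
    _ ≤ x * (m + 1) := Nat.mul_le_mul_right _ hxpos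
  -- color equalities
  have hxne : (x : ZMod p) ≠ 0 := hlt x hxpos (hDC i j hij hj)
  have hχx : (x : ZMod p) ^ E ≠ 0 := pow_ne_zero _ hxne
  have key : ∀ n : ℕ, y = x * n ∨ z = x * n → χ x = χ (x * n) → ((n : ZMod p)) ^ E = 1 := by
    intro n _ hcol
    rw [hχ] at hcol
    simp only [] at hcol
    rw [Nat.cast_mul, mul_pow] at hcol
    have : (x : ZMod p) ^ E * (n : ZMod p) ^ E = (x : ZMod p) ^ E * 1 := by
      rw [mul_one, ← hcol]
    exact mul_left_cancel₀ hχx this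
  have hmE : ((m : ℕ) : ZMod p) ^ E = 1 := by
    apply key m (Or.inl hm)
    rw [← hm]
    exact hxy
  have hm1E : ((m + 1 : ℕ) : ZMod p) ^ E = 1 := by
    apply key (m + 1) (Or.inr hzeq)
    rw [← hzeq]
    exact hxz
  have hmne : ((m : ℕ) : ZMod p) ≠ 0 := by
    apply hlt m hmpos
    have : m ≤ x * m := Nat.le_mul_of_pos_left _ hxpos
    omega
  have hm1ne : ((m + 1 : ℕ) : ZMod p) ≠ 0 := hlt (m + 1) (by omega) (by omega)
  obtain ⟨s1, hs1, hs1k⟩ := exists_kth_root p k hp hk _ hmne hmE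
  obtain ⟨s2, hs2, hs2k⟩ := exists_kth_root p k hp hk _ hm1ne hm1E
  exact ⟨m, hmpos, by omega, ⟨s1, hs1, hs1k⟩, ⟨s2, hs2, by exact_mod_cast hs2k⟩⟩
end

section
/- For every coloring c : ℤ⁺ → Fin l there exists a positive integer d and a positive integer q such that the three numbers d, dq, and d(q+1) all receive the same color under c. -/
/-- A fast-growing sequence: every difference divides all later differences. -/
private def gseq : ℕ → ℕ
  | 0 => 1
  | n + 1 => gseq n + Nat.factorial (gseq n)

private lemma gseq_pos (n : ℕ) : 0 < gseq n := by
  induction n with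
  | zero => simp [gseq]
  | succ n ih => simp only [gseq]; positivity

private lemma gseq_strictMono : StrictMono gseq := by
  apply strictMono_nat_of_lt_succ
  intro n
  have : 0 < Nat.factorial (gseq n) := Nat.factorial_pos _
  simp only [gseq]; omega

private lemma gseq_step_dvd {i j m : ℕ} (hij : i < j) (hjm : j ≤ m) :
    (gseq j - gseq i) ∣ (gseq (m + 1) - gseq m) := by
  have h1 : gseq i < gseq j := gseq_strictMono hij
  have h2 : gseq j ≤ gseq m := gseq_strictMono.monotone hjm
  have h3 : gseq (m + 1) - gseq m = Nat.factorial (gseq m) := by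
    simp [gseq]
  rw [h3]
  exact Nat.dvd_factorial (by omega) (by omega)

private lemma gseq_dvd {i j k : ℕ} (hij : i < j) (hjk : j ≤ k) :
    (gseq j - gseq i) ∣ (gseq k - gseq j) := by
  induction k with
  | zero => omega
  | succ k ih =>
    rcases Nat.lt_or_ge j (k + 1) with h | h
    · have hjk' : j ≤ k := by omega
      have h1 := gseq_step_dvd hij hjk'
      have h2 := ih hjk'
      have hm : gseq j ≤ gseq k := gseq_strictMono.monotone hjk'
      have hm2 : gseq k ≤ gseq (k + 1) := le_of_lt (gseq_strictMono (by omega))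
      have : gseq (k + 1) - gseq j = (gseq (k + 1) - gseq k) + (gseq k - gseq j) := by
        omega
      rw [this]
      exact dvd_add h1 h2
    · have : j = k + 1 := by omega
      simp [this]

/-- Infinite Ramsey-type lemma: any finite coloring of pairs of an infinite set
contains a monochromatic triangle. -/
private lemma mono_triangle {l : ℕ} (χ : ℕ → ℕ → Fin l) (A : Finset (Fin l)) :
    ∀ S : Set ℕ, S.Infinite → (∀ i ∈ S, ∀ j ∈ S, i < j → χ i j ∈ A) →
      ∃ i j k, i < j ∧ j < k ∧ χ i j = χ j k ∧ χ i j = χ i k := by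
  induction A using Finset.strongInduction with
  | _ A ih =>
    intro S hS hA
    obtain ⟨v, hv⟩ := hS.nonempty
    set S' : Set ℕ := S \ Set.Iic v with hS'def
    have hS' : S'.Infinite := hS.diff (Set.finite_Iic v)
    have hS'sub : ∀ w ∈ S', w ∈ S ∧ v < w := by
      intro w hw
      simp only [hS'def, Set.mem_diff, Set.mem_Iic] at hw
      exact ⟨hw.1, by omega⟩
    -- pigeonhole: some color t has infinite fiber among edges from v
    obtain ⟨t, ht⟩ : ∃ t : Fin l, {w ∈ S' | χ v w = t}.Infinite := by
      by_contra hcon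
      push_neg at hcon
      have hcon : ∀ t : Fin l, {w ∈ S' | χ v w = t}.Finite := hcon
      have : S' ⊆ ⋃ t : Fin l, {w ∈ S' | χ v w = t} := by
        intro w hw
        exact Set.mem_iUnion.2 ⟨χ v w, hw, rfl⟩
      exact hS' (Set.Finite.subset (Set.finite_iUnion hcon) this)
    set T : Set ℕ := {w ∈ S' | χ v w = t} with hTdef
    have hTS' : T ⊆ S' := fun w hw => hw.1
    have htA : t ∈ A := by
      obtain ⟨w, hw⟩ := ht.nonempty
      obtain ⟨hwS, hvw⟩ := hS'sub w (hTS' hw)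
      rw [← hw.2]
      exact hA v hv w hwS hvw
    by_cases hcase : ∃ w ∈ T, ∃ w' ∈ T, w < w' ∧ χ w w' = t
    · obtain ⟨w, hw, w', hw', hlt, heq⟩ := hcase
      refine ⟨v, w, w', (hS'sub w (hTS' hw)).2, hlt, ?_, ?_⟩
      · rw [hw.2, heq]
      · rw [hw.2, hw'.2]
    · push_neg at hcase
      refine ih (A.erase t) (Finset.erase_ssubset htA) T ht ?_
      intro i hi j hj hij
      refine Finset.mem_erase.2 ⟨hcase i hi j hj hij, ?_⟩
      obtain ⟨hiS, _⟩ := hS'sub i (hTS' hi)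
      obtain ⟨hjS, _⟩ := hS'sub j (hTS' hj)
      exact hA i hiS j hjS hij

theorem stmt_12 (l : ℕ) (c : ℕ → Fin l) :
    ∃ d q : ℕ, 0 < d ∧ 0 < q ∧ c d = c (d * q) ∧ c (d * q) = c (d * (q + 1)) := by
  obtain ⟨i, j, k, hij, hjk, h1, h2⟩ :=
    mono_triangle (fun i j => c (gseq j - gseq i)) Finset.univ Set.univ
      Set.infinite_univ (fun _ _ _ _ _ => Finset.mem_univ _)
  have hgi : gseq i < gseq j := gseq_strictMono hij
  have hgj : gseq j < gseq k := gseq_strictMono hjk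
  set d := gseq j - gseq i with hd
  have hdpos : 0 < d := by omega
  obtain ⟨q, hq⟩ := gseq_dvd hij (le_of_lt hjk)
  have hqpos : 0 < q := by
    rcases Nat.eq_zero_or_pos q with h | h
    · subst h; simp at hq; omega
    · exact h
  refine ⟨d, q, hdpos, hqpos, ?_, ?_⟩
  · have : gseq k - gseq j = d * q := hq
    simpa [← this] using h1
  · have h3 : gseq k - gseq j = d * q := hq
    have h4 : gseq k - gseq i = d * (q + 1) := by
      have : gseq k - gseq i = (gseq k - gseq j) + d := by omega
      rw [this, h3]; ring
    have := h1.symm.trans h2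
    simpa [← h3, ← h4] using this
end

section
/- For every positive integer k there exists a constant c₀(k) such that for every completely multiplicative function f : ℤ⁺ → {−1, 1}, there is a positive integer a ≤ c₀(k) with f(a) = f(a+1) = 1. -/
theorem stmt_14 (k : ℕ) (hk : 0 < k) :
    ∃ c₀ : ℕ, ∀ f : ℕ → ℤ,
      (∀ m n : ℕ, 0 < m → 0 < n → f (m * n) = f m * f n) →
      (∀ n : ℕ, 0 < n → f n = 1 ∨ f n = -1) →
      ∃ a : ℕ, 0 < a ∧ a ≤ c₀ ∧ f a = 1 ∧ f (a + 1) = 1 := by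
  use 9
  intro f hmul hpm
  have h1 : f 1 = 1 := by
    have h := hmul 1 1 one_pos one_pos
    rcases hpm 1 one_pos with h1 | h1
    · exact h1
    · rw [h1] at h; norm_num at h
  rcases hpm 2 (by norm_num) with h2 | h2
  · exact ⟨1, by norm_num, by norm_num, h1, h2⟩
  · have h4 : f 4 = 1 := by
      have h := hmul 2 2 (by norm_num) (by norm_num)
      rw [h2] at h; norm_num at h; exact h
    rcases hpm 3 (by norm_num) with h3 | h3
    · exact ⟨3, by norm_num, by norm_num, h3, h4⟩
    · have h9 : f 9 = 1 := by
        have h := hmul 3 3 (by norm_num) (by norm_num)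
        rw [h3] at h; norm_num at h; exact h
      rcases hpm 5 (by norm_num) with h5 | h5
      · exact ⟨4, by norm_num, by norm_num, h4, h5⟩
      · have h10 : f 10 = 1 := by
          have h := hmul 2 5 (by norm_num) (by norm_num)
          rw [h2, h5] at h; norm_num at h; exact h
        exact ⟨9, by norm_num, by norm_num, h9, h10⟩
end

section
/- Let N = R₃(l) be the l-color Ramsey number for triangles and let (a_n) be a sequence of positive integers such that for all i < j < k ≤ N, ∑_{m=i}^{j-1} a_m divides ∑_{m=j}^{k-1} a_m. Then for every coloring c of the positive integers with l colors, there exist indices i < j < k ≤ N such that the three partial sums x = ∑_{m=i}^{j-1} a_m, y = ∑_{m=j}^{k-1} a_m, z = ∑_{m=i}^{k-1} a_m all have the same color, satisfy x + y = z, and x ∣ y. -/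
theorem stmt_16 (l N : ℕ)
    (hRamsey : ∀ ec : ℕ → ℕ → Fin l, ∃ i j k : ℕ,
      1 ≤ i ∧ i < j ∧ j < k ∧ k ≤ N ∧ ec i j = ec i k ∧ ec i j = ec j k)
    (a : ℕ → ℕ) (ha : ∀ n, 0 < a n)
    (hdvd : ∀ i j k : ℕ, 1 ≤ i → i < j → j < k → k ≤ N →
      (∑ m ∈ Finset.Ico i j, a m) ∣ (∑ m ∈ Finset.Ico j k, a m))
    (c : ℕ → Fin l) :
    ∃ i j k : ℕ, 1 ≤ i ∧ i < j ∧ j < k ∧ k ≤ N ∧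
      c (∑ m ∈ Finset.Ico i j, a m) = c (∑ m ∈ Finset.Ico j k, a m) ∧
      c (∑ m ∈ Finset.Ico j k, a m) = c (∑ m ∈ Finset.Ico i k, a m) ∧
      (∑ m ∈ Finset.Ico i j, a m) + (∑ m ∈ Finset.Ico j k, a m)
        = (∑ m ∈ Finset.Ico i k, a m) ∧
      (∑ m ∈ Finset.Ico i j, a m) ∣ (∑ m ∈ Finset.Ico j k, a m) := by
  obtain ⟨i, j, k, h1, hij, hjk, hkN, e1, e2⟩ :=
    hRamsey (fun i j => c (∑ m ∈ Finset.Ico i j, a m))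

  exact ⟨i, j, k, h1, hij, hjk, hkN, e2, e2 ▸ e1,
    Finset.sum_Ico_consecutive a hij.le hjk.le,
    hdvd i j k h1 hij hjk hkN⟩
end

section
/- For every prime p > 5, there exist consecutive quadratic residues modulo p: integers r, r+1 with 0 < r < r+1 < p such that both r and r+1 are nonzero squares modulo p. -/
lemma sq_of_nonsq_mul {p : ℕ} [Fact p.Prime] {a b : ZMod p}
    (ha : a ≠ 0) (hb : b ≠ 0) (hna : ¬ IsSquare a) (hnb : ¬ IsSquare b) :
    IsSquare (a * b) := by
  have h1 : quadraticChar (ZMod p) a = -1 := quadraticChar_neg_one_iff_not_isSquare.mpr hna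
  have h2 : quadraticChar (ZMod p) b = -1 := quadraticChar_neg_one_iff_not_isSquare.mpr hnb
  have h3 : quadraticChar (ZMod p) (a * b) = 1 := by rw [map_mul, h1, h2]; ring
  exact (quadraticChar_one_iff_isSquare (mul_ne_zero ha hb)).mp h3

lemma cast_ne_zero' {p : ℕ} [Fact p.Prime] {n : ℕ} (h0 : 0 < n) (h : n < p) :
    ((n : ℕ) : ZMod p) ≠ 0 := by
  rw [Ne, ZMod.natCast_eq_zero_iff]
  intro hd
  exact absurd (Nat.le_of_dvd h0 hd) (by omega)

theorem stmt_18 (p : ℕ) (hp : p.Prime) (hp5 : p > 5) :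
    ∃ r : ℕ, 0 < r ∧ r + 1 < p ∧
      (∃ s : ZMod p, s ≠ 0 ∧ s ^ 2 = (r : ZMod p)) ∧
      (∃ s : ZMod p, s ≠ 0 ∧ s ^ 2 = ((r + 1 : ℕ) : ZMod p)) := by
  haveI : Fact p.Prime := ⟨hp⟩
  have h2ne : ((2 : ℕ) : ZMod p) ≠ 0 := cast_ne_zero' (by norm_num) (by omega)
  have h5ne : ((5 : ℕ) : ZMod p) ≠ 0 := cast_ne_zero' (by norm_num) (by omega)
  by_cases h2 : IsSquare ((2 : ℕ) : ZMod p)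
  · obtain ⟨s, hs⟩ := h2
    refine ⟨1, one_pos, by omega, ⟨1, one_ne_zero, by norm_num⟩, ⟨s, ?_, by rw [sq, ← hs]⟩⟩
    intro h; rw [h, mul_zero] at hs; exact h2ne hs
  · by_cases h5 : IsSquare ((5 : ℕ) : ZMod p)
    · obtain ⟨s, hs⟩ := h5
      have h2z : (2 : ZMod p) ≠ 0 := by exact_mod_cast h2ne
      refine ⟨4, by norm_num, by omega, ⟨2, h2z, by norm_num⟩, ⟨s, ?_, by rw [sq, ← hs]⟩⟩
      intro h; rw [h, mul_zero] at hs; exact h5ne hs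
    · -- p ≠ 7 since 2 is a square mod 7
      have hp7 : p ≠ 7 := by
        intro h; subst h
        refine h2 ⟨((3 : ℕ) : ZMod 7), ?_⟩
        rw [← Nat.cast_mul, ZMod.natCast_eq_natCast_iff]
        decide
      have hp11 : 11 ≤ p := by
        rcases Nat.lt_or_ge p 11 with h | h
        · interval_cases p <;> simp_all <;> norm_num at hp
        · exact h
      have h10 : IsSquare ((10 : ℕ) : ZMod p) := by
        have : ((10 : ℕ) : ZMod p) = ((2 : ℕ) : ZMod p) * ((5 : ℕ) : ZMod p) := by
          push_cast; ring
        rw [this]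
        exact sq_of_nonsq_mul h2ne h5ne h2 h5
      obtain ⟨s, hs⟩ := h10
      have h10ne : ((10 : ℕ) : ZMod p) ≠ 0 := cast_ne_zero' (by norm_num) (by omega)
      have h3z : (3 : ZMod p) ≠ 0 := by
        have := cast_ne_zero' (p := p) (n := 3) (by norm_num) (by omega)
        exact_mod_cast this
      refine ⟨9, by norm_num, by omega, ⟨3, h3z, by push_cast; norm_num⟩,
        ⟨s, ?_, by rw [sq, ← hs]⟩⟩
      intro h; rw [h, mul_zero] at hs; exact h10ne hs
end

section
/- Let S'(k) be the least N such that every k-coloring of {1,...,N} admits monochromatic x, y, z with x + y = z and x ∣ y. Then for every prime p > S'(k), the least positive integer r such that r and r+1 are both k-th power residues mod p satisfies r ≤ S'(k); in particular Λ(k,2) ≤ S'(k). -/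
theorem stmt_19 (k : ℕ) (hk : 0 < k) (S' : ℕ)
    (hP : ∀ c : ℕ → Fin k, ∃ x y z : ℕ,
      0 < x ∧ x ≤ S' ∧ 0 < y ∧ y ≤ S' ∧ 0 < z ∧ z ≤ S' ∧
      c x = c y ∧ c y = c z ∧ x + y = z ∧ x ∣ y)
    (hleast : ∀ N : ℕ, (∀ c : ℕ → Fin k, ∃ x y z : ℕ,
      0 < x ∧ x ≤ N ∧ 0 < y ∧ y ≤ N ∧ 0 < z ∧ z ≤ N ∧
      c x = c y ∧ c y = c z ∧ x + y = z ∧ x ∣ y) → S' ≤ N) :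
    ∀ p : ℕ, p.Prime → p > S' →
      ∃ r : ℕ, 0 < r ∧ r ≤ S' ∧
        (∃ s : ZMod p, s ≠ 0 ∧ s ^ k = (r : ZMod p)) ∧
        (∃ s : ZMod p, s ≠ 0 ∧ s ^ k = ((r + 1 : ℕ) : ZMod p)) := by
  intro p hp hps
  haveI : Fact p.Prime := ⟨hp⟩
  obtain ⟨g, hg⟩ := IsCyclic.exists_generator (α := (ZMod p)ˣ)
  have hlog : ∀ u : (ZMod p)ˣ, ∃ n : ℕ, g ^ n = u := by
    intro u
    have h := hg u
    rw [← mem_powers_iff_mem_zpowers, Submonoid.mem_powers_iff] at h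
    exact h
  set f : (ZMod p)ˣ → ℕ := fun u => (hlog u).choose with hf
  have hfspec : ∀ u, g ^ f u = u := fun u => (hlog u).choose_spec
  have key : ∀ a b : (ZMod p)ˣ, f a % k = f b % k →
      ∃ s : ZMod p, s ≠ 0 ∧ s ^ k = (b : ZMod p) * (a : ZMod p)⁻¹ := by
    intro a b hab
    have hmod : (f a : ℤ) ≡ (f b : ℤ) [ZMOD (k : ℤ)] := by
      show (f a : ℤ) % k = (f b : ℤ) % k
      rw [← Int.natCast_mod, ← Int.natCast_mod, hab]
    obtain ⟨t, ht⟩ := Int.ModEq.dvd hmod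
    refine ⟨((g ^ t : (ZMod p)ˣ) : ZMod p), Units.ne_zero _, ?_⟩
    have hu : (g ^ t) ^ (k : ℤ) = b * a⁻¹ := by
      rw [← zpow_mul, mul_comm t, ← ht]
      rw [zpow_sub, zpow_natCast, zpow_natCast, hfspec, hfspec]
    have hu' : (g ^ t) ^ k = b * a⁻¹ := by
      rw [← zpow_natCast (g ^ t) k]; exact hu
    calc ((g ^ t : (ZMod p)ˣ) : ZMod p) ^ k = (((g ^ t) ^ k : (ZMod p)ˣ) : ZMod p) := by
          push_cast; ring
      _ = ((b * a⁻¹ : (ZMod p)ˣ) : ZMod p) := by rw [hu']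
      _ = (b : ZMod p) * (a : ZMod p)⁻¹ := by
          rw [Units.val_mul, Units.val_inv_eq_inv_val]
  let c : ℕ → Fin k := fun n =>
    if hn : IsUnit ((n : ZMod p)) then ⟨f hn.unit % k, Nat.mod_lt _ hk⟩ else ⟨0, hk⟩
  obtain ⟨x, y, z, hx0, hxS, hy0, hyS, hz0, hzS, hcxy, hcyz, hxyz, hdvd⟩ := hP c
  obtain ⟨m, hm⟩ := hdvd
  have hne : ∀ n : ℕ, 0 < n → n ≤ S' → (n : ZMod p) ≠ 0 := by
    intro n hn hnS h
    rw [ZMod.natCast_eq_zero_iff] at h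
    have := Nat.le_of_dvd hn h
    omega
  have hux : IsUnit ((x : ZMod p)) := isUnit_iff_ne_zero.mpr (hne x hx0 hxS)
  have huy : IsUnit ((y : ZMod p)) := isUnit_iff_ne_zero.mpr (hne y hy0 hyS)
  have huz : IsUnit ((z : ZMod p)) := isUnit_iff_ne_zero.mpr (hne z hz0 hzS)
  have hcxz : c x = c z := hcxy.trans hcyz
  have hxy' : f hux.unit % k = f huy.unit % k := by
    have := hcxy
    simp only [c, dif_pos hux, dif_pos huy, Fin.mk.injEq] at this
    exact this
  have hxz' : f hux.unit % k = f huz.unit % k := by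
    have := hcxz
    simp only [c, dif_pos hux, dif_pos huz, Fin.mk.injEq] at this
    exact this
  have hm0 : 0 < m := by
    rcases Nat.eq_zero_or_pos m with h | h
    · subst h; simp at hm; omega
    · exact h
  have hmS : m ≤ S' := by
    have : m ≤ x * m := Nat.le_mul_of_pos_left m hx0
    omega
  refine ⟨m, hm0, hmS, ?_, ?_⟩
  · obtain ⟨s, hs0, hs⟩ := key hux.unit huy.unit hxy'
    refine ⟨s, hs0, ?_⟩
    rw [hs, hux.unit_spec, huy.unit_spec]
    have hxne : (x : ZMod p) ≠ 0 := hne x hx0 hxS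
    have : (y : ZMod p) = (x : ZMod p) * m := by rw [hm]; push_cast; ring
    field_simp [this]
    exact this
  · obtain ⟨s, hs0, hs⟩ := key hux.unit huz.unit hxz'
    refine ⟨s, hs0, ?_⟩
    rw [hs, hux.unit_spec, huz.unit_spec]
    have hxne : (x : ZMod p) ≠ 0 := hne x hx0 hxS
    have : (z : ZMod p) = (x : ZMod p) * ((m + 1 : ℕ) : ZMod p) := by
      have : z = x * (m + 1) := by rw [← hxyz, hm]; ring
      rw [this]; push_cast; ring
    field_simp [this]
    exact this
end
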